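/- For integers d ≥ 0 and k ≥ 1, every finite graph G with maximum average degree less than (2d+2)/(d+2) · k is k-choosable with defect d. -/

import Mathlib

/-- The monochromatic subgraph of `G` under colouring `φ`. -/
def SimpleGraph.monoSub {V : Type*} (G : SimpleGraph V) (φ : V → ℕ) : SimpleGraph V where
  Adj u v := G.Adj u v ∧ φ u = φ v
  symm := ⟨fun u v h => ⟨h.1.symm, h.2.symm⟩⟩
  loopless := ⟨fun v h => h.1.ne rfl⟩

/-- The colouring `φ` has defect at most `d`: every vertex has at most `d`
neighbours of its own colour. -/
def SimpleGraph.DefectLe {V : Type*} (G : SimpleGraph V) (φ : V → ℕ) (d : ℕ) : Prop :=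
  ∀ v : V, {w : V | G.Adj v w ∧ φ w = φ v}.ncard ≤ d

/-- The colouring `φ` has clustering at most `c`: every connected component of
the monochromatic subgraph has at most `c` vertices. -/
def SimpleGraph.ClusterLe {V : Type*} (G : SimpleGraph V) (φ : V → ℕ) (c : ℕ) : Prop :=
  ∀ v : V, {w : V | (G.monoSub φ).Reachable v w}.ncard ≤ c

/-- Twice the number of edges of `G` inside the vertex set `s`
(the number of ordered adjacent pairs in `s`). -/
noncomputable def SimpleGraph.degPairs {V : Type*} (G : SimpleGraph V) (s : Finset V) : ℕ :=
  {p : V × V | p.1 ∈ s ∧ p.2 ∈ s ∧ G.Adj p.1 p.2}.ncard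

namespace DefColAux

variable {V : Type*}

def nd (G : SimpleGraph V) [DecidableRel G.Adj] (u : V) (s : Finset V) : ℕ :=
  (s.filter (fun w => G.Adj u w)).card

def cd (G : SimpleGraph V) [DecidableRel G.Adj] (φ : V → ℕ) (u : V) (c : ℕ)
    (s : Finset V) : ℕ :=
  (s.filter (fun w => G.Adj u w ∧ φ w = c)).card

def md (G : SimpleGraph V) [DecidableRel G.Adj] (φ : V → ℕ) (u : V) (s : Finset V) : ℕ :=
  cd G φ u (φ u) s

lemma nd_empty (G : SimpleGraph V) [DecidableRel G.Adj] (u : V) : nd G u ∅ = 0 := by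
  simp [nd]

lemma sum_cd_le (G : SimpleGraph V) [DecidableRel G.Adj] (φ : V → ℕ) (u : V)
    (s : Finset V) (t : Finset ℕ) :
    (∑ c ∈ t, cd G φ u c s) ≤ nd G u s := by
  classical
  set S' : Finset V := s.filter (fun w => G.Adj u w ∧ φ w ∈ t) with hS'
  have h1 : S'.card = ∑ c ∈ t, (S'.filter (fun w => φ w = c)).card :=
    Finset.card_eq_sum_card_fiberwise (fun w hw => (Finset.mem_filter.mp hw).2.2)
  have h2 : ∀ c ∈ t, (S'.filter (fun w => φ w = c)).card = cd G φ u c s := by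
    intro c hc
    congr 1
    ext w
    simp only [hS', Finset.mem_filter, cd]
    constructor
    · rintro ⟨⟨hws, hadj, -⟩, hc'⟩; exact ⟨hws, hadj, hc'⟩
    · rintro ⟨hws, hadj, hc'⟩; exact ⟨⟨hws, hadj, hc' ▸ hc⟩, hc'⟩
  calc (∑ c ∈ t, cd G φ u c s) = ∑ c ∈ t, (S'.filter (fun w => φ w = c)).card := by
        exact (Finset.sum_congr rfl h2).symm
    _ = S'.card := h1.symm
    _ ≤ nd G u s := by
        apply Finset.card_le_card
        intro w hw
        simp only [hS', Finset.mem_filter] at hw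
        exact Finset.mem_filter.mpr ⟨hw.1, hw.2.1⟩

lemma exists_small_class (G : SimpleGraph V) [DecidableRel G.Adj] (φ : V → ℕ) (u : V)
    (s : Finset V) (t : Finset ℕ) (d : ℕ) (h : nd G u s + 1 ≤ t.card * (d + 1)) :
    ∃ c ∈ t, cd G φ u c s ≤ d := by
  by_contra hcon
  push_neg at hcon
  have h1 : t.card * (d+1) ≤ ∑ c ∈ t, cd G φ u c s := by
    calc t.card * (d+1) = ∑ _c ∈ t, (d+1) := by rw [Finset.sum_const, smul_eq_mul]
      _ ≤ ∑ c ∈ t, cd G φ u c s := Finset.sum_le_sum (fun c hc => hcon c hc)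
  have h2 := sum_cd_le G φ u s t
  have := le_trans h (le_trans h1 h2)
  exact Nat.not_succ_le_self _ this


/-- number of monochromatic ordered adjacent pairs inside `X` -/
def mp (G : SimpleGraph V) [DecidableRel G.Adj] (φ : V → ℕ) (X : Finset V) : ℕ :=
  ((X ×ˢ X).filter (fun p : V × V => G.Adj p.1 p.2 ∧ φ p.1 = φ p.2)).card

/-- monochromatic ordered pairs avoiding `u` in both coordinates -/
def bp (G : SimpleGraph V) [DecidableRel G.Adj] [DecidableEq V] (φ : V → ℕ) (X : Finset V) (u : V) : ℕ :=
  ((X ×ˢ X).filter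
    (fun p : V × V => ((G.Adj p.1 p.2 ∧ φ p.1 = φ p.2) ∧ ¬ p.1 = u) ∧ ¬ p.2 = u)).card

variable (G : SimpleGraph V) [DecidableRel G.Adj]

lemma mp_decomp [DecidableEq V] (φ : V → ℕ) (X : Finset V) (u : V) (hu : u ∈ X) :
    mp G φ X = 2 * md G φ u X + bp G φ X u := by
  classical
  have split1 :
      ((X ×ˢ X).filter (fun p : V × V => G.Adj p.1 p.2 ∧ φ p.1 = φ p.2)).card
        = ((X ×ˢ X).filter
            (fun p : V × V => (G.Adj p.1 p.2 ∧ φ p.1 = φ p.2) ∧ p.1 = u)).card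
          + ((X ×ˢ X).filter
            (fun p : V × V => (G.Adj p.1 p.2 ∧ φ p.1 = φ p.2) ∧ ¬ p.1 = u)).card := by
    have base := Finset.card_filter_add_card_filter_not
      (s := (X ×ˢ X).filter (fun p : V × V => G.Adj p.1 p.2 ∧ φ p.1 = φ p.2))
      (p := fun p : V × V => p.1 = u)
    rw [Finset.filter_filter, Finset.filter_filter] at base
    exact base.symm
  have split2 :
      ((X ×ˢ X).filter
          (fun p : V × V => (G.Adj p.1 p.2 ∧ φ p.1 = φ p.2) ∧ ¬ p.1 = u)).card
        = ((X ×ˢ X).filter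
            (fun p : V × V => ((G.Adj p.1 p.2 ∧ φ p.1 = φ p.2) ∧ ¬ p.1 = u) ∧ p.2 = u)).card
          + ((X ×ˢ X).filter
            (fun p : V × V =>
              ((G.Adj p.1 p.2 ∧ φ p.1 = φ p.2) ∧ ¬ p.1 = u) ∧ ¬ p.2 = u)).card := by
    have base := Finset.card_filter_add_card_filter_not
      (s := (X ×ˢ X).filter
        (fun p : V × V => (G.Adj p.1 p.2 ∧ φ p.1 = φ p.2) ∧ ¬ p.1 = u))
      (p := fun p : V × V => p.2 = u)
    rw [Finset.filter_filter, Finset.filter_filter] at base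
    exact base.symm
  have e1 : ((X ×ˢ X).filter
        (fun p : V × V => (G.Adj p.1 p.2 ∧ φ p.1 = φ p.2) ∧ p.1 = u))
      = {u} ×ˢ (X.filter (fun w => G.Adj u w ∧ φ w = φ u)) := by
    ext ⟨a, b⟩
    simp only [Finset.mem_filter, Finset.mem_product, Finset.mem_singleton]
    constructor
    · rintro ⟨⟨ha, hb⟩, ⟨hadj, hphi⟩, hau⟩
      subst hau
      exact ⟨rfl, hb, hadj, hphi.symm⟩
    · rintro ⟨hau, hb, hadj, hphi⟩
      subst hau
      exact ⟨⟨hu, hb⟩, ⟨hadj, hphi.symm⟩, rfl⟩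
  have e2 : ((X ×ˢ X).filter
        (fun p : V × V => ((G.Adj p.1 p.2 ∧ φ p.1 = φ p.2) ∧ ¬ p.1 = u) ∧ p.2 = u))
      = (X.filter (fun w => G.Adj u w ∧ φ w = φ u)) ×ˢ {u} := by
    ext ⟨a, b⟩
    simp only [Finset.mem_filter, Finset.mem_product, Finset.mem_singleton]
    constructor
    · rintro ⟨⟨ha, hb⟩, ⟨⟨hadj, hphi⟩, -⟩, hbu⟩
      subst hbu
      exact ⟨⟨ha, hadj.symm, hphi⟩, rfl⟩
    · rintro ⟨⟨ha, hadj, hphi⟩, hbu⟩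
      subst hbu
      refine ⟨⟨ha, hu⟩, ⟨⟨hadj.symm, hphi⟩, ?_⟩, rfl⟩
      exact fun h => (G.ne_of_adj hadj) (h.symm)
  have c1 : (({u} : Finset V) ×ˢ (X.filter (fun w => G.Adj u w ∧ φ w = φ u))).card
      = md G φ u X := by
    rw [Finset.card_product, Finset.card_singleton, one_mul]; rfl
  have c2 : ((X.filter (fun w => G.Adj u w ∧ φ w = φ u)) ×ˢ ({u} : Finset V)).card
      = md G φ u X := by
    rw [Finset.card_product, Finset.card_singleton, mul_one]; rfl
  have key : mp G φ X = md G φ u X + (md G φ u X + bp G φ X u) := by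
    rw [mp, split1, split2, e1, e2, c1, c2]; rfl
  omega

lemma md_update [DecidableEq V] (φ : V → ℕ) (X : Finset V) (u : V) (c : ℕ) :
    md G (Function.update φ u c) u X = cd G φ u c X := by
  unfold md cd
  rw [Function.update_self]
  congr 1
  apply Finset.filter_congr
  intro w _
  by_cases hw : w = u
  · subst hw
    simp [SimpleGraph.irrefl]
  · rw [Function.update_of_ne hw]

lemma bp_update [DecidableEq V] (φ : V → ℕ) (X : Finset V) (u : V) (c : ℕ) :
    bp G (Function.update φ u c) X u = bp G φ X u := by
  unfold bp
  congr 1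
  apply Finset.filter_congr
  intro p _
  constructor
  · rintro ⟨⟨⟨hadj, hphi⟩, h1⟩, h2⟩
    rw [Function.update_of_ne h1, Function.update_of_ne h2] at hphi
    exact ⟨⟨⟨hadj, hphi⟩, h1⟩, h2⟩
  · rintro ⟨⟨⟨hadj, hphi⟩, h1⟩, h2⟩
    rw [← Function.update_of_ne h1 c φ, ← Function.update_of_ne h2 c φ] at hphi
    exact ⟨⟨⟨hadj, hphi⟩, h1⟩, h2⟩


theorem thmB [DecidableEq V] (d : ℕ) (X : Finset V) (L' : V → Finset ℕ)
    (hdeg : ∀ u ∈ X, nd G u X + 1 ≤ (L' u).card * (d + 1)) :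
    ∃ φ : V → ℕ, (∀ u ∈ X, φ u ∈ L' u) ∧ (∀ u ∈ X, md G φ u X ≤ d) := by
  classical
  have hpos : ∀ u ∈ X, 0 < (L' u).card := by
    intro u hu
    rcases Nat.eq_zero_or_pos (L' u).card with h0 | h
    · exfalso; have := hdeg u hu; rw [h0, zero_mul] at this; omega
    · exact h
  set φ₀ : V → ℕ := fun u =>
    if h : 0 < (L' u).card then (L' u).min' (Finset.card_pos.mp h) else 0 with hφ₀def
  have hφ₀ : ∀ u ∈ X, φ₀ u ∈ L' u := by
    intro u hu
    have h := hpos u hu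
    simp only [hφ₀def, dif_pos h]
    exact (L' u).min'_mem _
  suffices H : ∀ n : ℕ, ∀ φ : V → ℕ, (∀ u ∈ X, φ u ∈ L' u) → mp G φ X ≤ n →
      ∃ ψ : V → ℕ, (∀ u ∈ X, ψ u ∈ L' u) ∧ (∀ u ∈ X, md G ψ u X ≤ d) by
    exact H (mp G φ₀ X) φ₀ hφ₀ le_rfl
  intro n
  induction n using Nat.strong_induction_on with
  | _ n ih =>
    intro φ hφ hm
    by_cases hgood : ∀ u ∈ X, md G φ u X ≤ d
    · exact ⟨φ, hφ, hgood⟩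
    · push_neg at hgood
      obtain ⟨u, hu, hbad⟩ := hgood
      obtain ⟨c, hc, hcd⟩ := exists_small_class G φ u X (L' u) d (hdeg u hu)
      set φ' := Function.update φ u c with hφ'def
      have hφ' : ∀ w ∈ X, φ' w ∈ L' w := by
        intro w hw
        by_cases hwu : w = u
        · subst hwu; rw [hφ'def, Function.update_self]; exact hc
        · rw [hφ'def, Function.update_of_ne hwu]; exact hφ w hw
      have hdec : mp G φ' X < mp G φ X := by
        rw [mp_decomp G φ' X u hu, mp_decomp G φ X u hu,
          hφ'def, md_update G φ X u c, bp_update G φ X u c]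
        omega
      exact ih (mp G φ' X) (lt_of_lt_of_le hdec hm) φ' hφ' le_rfl

lemma nd_erase_self [DecidableEq V] (u : V) (Y : Finset V) :
    nd G u (Y.erase u) = nd G u Y := by
  unfold nd
  rw [Finset.filter_erase]
  rw [Finset.erase_eq_of_notMem]
  intro hmem
  exact G.irrefl (Finset.mem_filter.mp hmem).2

lemma nd_insert [DecidableEq V] (v u : V) (s : Finset V) (hu : u ∉ s) :
    nd G v (insert u s) = nd G v s + (if G.Adj v u then 1 else 0) := by
  unfold nd
  rw [Finset.filter_insert]
  by_cases h : G.Adj v u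
  · rw [if_pos h, if_pos h, Finset.card_insert_of_notMem (fun hc => hu (Finset.mem_filter.mp hc).1)]
  · rw [if_neg h, if_neg h, add_zero]

lemma sum_ite_adj [DecidableEq V] (u : V) (s : Finset V) :
    (∑ v ∈ s, if G.Adj v u then 1 else 0) = nd G u s := by
  rw [← Finset.card_filter]
  unfold nd
  congr 1
  apply Finset.filter_congr
  intro v _
  exact ⟨fun h => h.symm, fun h => h.symm⟩

lemma D_erase [DecidableEq V] (u : V) (Y : Finset V) (hu : u ∈ Y) :
    (∑ v ∈ Y, nd G v Y) = (∑ v ∈ Y.erase u, nd G v (Y.erase u)) + 2 * nd G u Y := by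
  have h1 : (∑ v ∈ Y, nd G v Y) = nd G u Y + ∑ v ∈ Y.erase u, nd G v Y := by
    rw [← Finset.add_sum_erase _ _ hu]
  have h2 : ∀ v ∈ Y.erase u, nd G v Y = nd G v (Y.erase u) + (if G.Adj v u then 1 else 0) := by
    intro v _
    conv_lhs => rw [← Finset.insert_erase hu]
    exact nd_insert G v u (Y.erase u) (Finset.notMem_erase u Y)
  have h3 : (∑ v ∈ Y.erase u, nd G v Y)
      = (∑ v ∈ Y.erase u, nd G v (Y.erase u)) + nd G u (Y.erase u) := by
    rw [Finset.sum_congr rfl h2, Finset.sum_add_distrib, sum_ite_adj]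
  rw [h1, h3, nd_erase_self]
  ring

lemma sdiff_erase_eq [DecidableEq V] (A Y : Finset V) (u : V) (huA : u ∈ A) (huY : u ∈ Y) :
    A \ (Y.erase u) = insert u (A \ Y) := by
  ext v
  simp only [Finset.mem_sdiff, Finset.mem_erase, Finset.mem_insert, not_and]
  constructor
  · rintro ⟨hvA, hv⟩
    by_cases hvu : v = u
    · exact Or.inl hvu
    · exact Or.inr ⟨hvA, fun hvY => hvu (by tauto)⟩
  · rintro (rfl | ⟨hvA, hvY⟩)
    · exact ⟨huA, fun h => absurd huY (absurd rfl h)⟩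
    · exact ⟨hvA, fun _ hvY' => hvY hvY'⟩

lemma C_erase [DecidableEq V] (A Y : Finset V) (u : V) (hYA : Y ⊆ A) (hu : u ∈ Y) :
    (∑ v ∈ Y.erase u, nd G v (A \ Y.erase u)) + nd G u (A \ Y)
      = (∑ v ∈ Y, nd G v (A \ Y)) + nd G u Y := by
  have huA : u ∈ A := hYA hu
  have hnot : u ∉ A \ Y := fun h => (Finset.mem_sdiff.mp h).2 hu
  have h2 : ∀ v ∈ Y.erase u,
      nd G v (A \ Y.erase u) = nd G v (A \ Y) + (if G.Adj v u then 1 else 0) := by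
    intro v _
    rw [sdiff_erase_eq A Y u huA hu]
    exact nd_insert G v u (A \ Y) hnot
  have h3 : (∑ v ∈ Y.erase u, nd G v (A \ Y.erase u))
      = (∑ v ∈ Y.erase u, nd G v (A \ Y)) + nd G u (Y.erase u) := by
    rw [Finset.sum_congr rfl h2, Finset.sum_add_distrib, sum_ite_adj]
  have h4 : (∑ v ∈ Y, nd G v (A \ Y))
      = nd G u (A \ Y) + ∑ v ∈ Y.erase u, nd G v (A \ Y) := by
    rw [← Finset.add_sum_erase _ _ hu]
  rw [h3, h4, nd_erase_self]
  ring

lemma peel [DecidableEq V] (A : Finset V) (k d : ℕ)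
    (hwit : ∀ X : Finset V, X ⊆ A → X.Nonempty →
      ∃ u ∈ X, k * (d+1) ≤ (d+1) * nd G u (A \ X) + nd G u X) :
    ∀ n : ℕ, ∀ Y : Finset V, Y.card ≤ n → Y ⊆ A →
      2*k*(d+1)*Y.card ≤ (d+2) * (∑ v ∈ Y, nd G v Y)
        + 2*(d+1) * (∑ v ∈ Y, nd G v (A \ Y)) := by
  intro n
  induction n with
  | zero =>
    intro Y hcard _
    have : Y = ∅ := Finset.card_eq_zero.mp (Nat.le_zero.mp hcard)
    subst this
    simp
  | succ n ihn =>
    intro Y hcard hYA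
    rcases Y.eq_empty_or_nonempty with rfl | hYne
    · simp
    · obtain ⟨u, hu, hw⟩ := hwit Y hYA hYne
      set Y' := Y.erase u with hY'
      have hcard' : Y'.card + 1 = Y.card := Finset.card_erase_add_one hu
      have hY'A : Y' ⊆ A := (Finset.erase_subset u Y).trans hYA
      have IH : 2*k*(d+1)*Y'.card ≤ (d+2) * (∑ v ∈ Y', nd G v Y')
          + 2*(d+1) * (∑ v ∈ Y', nd G v (A \ Y')) := ihn Y' (by omega) hY'A
      have hD := D_erase G u Y hu
      have hC := C_erase G A Y u hYA hu
      calc 2*k*(d+1)*Y.card = 2*k*(d+1)*Y'.card + 2*(k*(d+1)) := by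
            rw [← hcard']; ring
        _ ≤ ((d+2) * (∑ v ∈ Y', nd G v Y') + 2*(d+1) * (∑ v ∈ Y', nd G v (A \ Y')))
            + 2*((d+1) * nd G u (A \ Y) + nd G u Y) :=
            add_le_add IH (Nat.mul_le_mul_left 2 hw)
        _ = (d+2) * (∑ v ∈ Y', nd G v Y')
            + 2*(d+1) * ((∑ v ∈ Y', nd G v (A \ Y')) + nd G u (A \ Y))
            + 2 * nd G u Y := by ring
        _ = (d+2) * (∑ v ∈ Y', nd G v Y')
            + 2*(d+1) * ((∑ v ∈ Y, nd G v (A \ Y)) + nd G u Y)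
            + 2 * nd G u Y := by rw [hC]
        _ = (d+2) * ((∑ v ∈ Y', nd G v Y') + 2 * nd G u Y)
            + 2*(d+1) * (∑ v ∈ Y, nd G v (A \ Y)) := by ring
        _ = (d+2) * (∑ v ∈ Y, nd G v Y) + 2*(d+1) * (∑ v ∈ Y, nd G v (A \ Y)) := by
            rw [← hD]

lemma core [DecidableEq V] (A : Finset V) (k d : ℕ)
    (hdensA : (d+2) * (∑ v ∈ A, nd G v A) + 1 ≤ 2*k*(d+1)*A.card) :
    ∃ X : Finset V, X ⊆ A ∧ X.Nonempty ∧
      ∀ u ∈ X, (d+1) * nd G u (A \ X) + nd G u X + 1 ≤ k*(d+1) := by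
  by_contra h
  push_neg at h
  have hwit : ∀ X : Finset V, X ⊆ A → X.Nonempty →
      ∃ u ∈ X, k * (d+1) ≤ (d+1) * nd G u (A \ X) + nd G u X := by
    intro X hXA hXne
    obtain ⟨u, hu, hlt⟩ := h X hXA hXne
    exact ⟨u, hu, by omega⟩
  have hpeel := peel G A k d hwit A.card A le_rfl (Finset.Subset.refl A)
  have hCA : (∑ v ∈ A, nd G v (A \ A)) = 0 := by
    rw [Finset.sdiff_self]
    exact Finset.sum_eq_zero (fun v _ => by simp [nd])
  rw [hCA, mul_zero, add_zero] at hpeel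
  exact Nat.not_succ_le_self _ (hdensA.trans hpeel)

lemma main [DecidableEq V] (k d : ℕ) (L : V → Finset ℕ) (hL : ∀ v, k ≤ (L v).card)
    (hdens : ∀ s : Finset V, s.Nonempty →
      (d+2) * (∑ v ∈ s, nd G v s) + 1 ≤ 2*k*(d+1)*s.card) :
    ∀ n : ℕ, ∀ A : Finset V, A.card ≤ n →
      ∃ φ : V → ℕ, (∀ v ∈ A, φ v ∈ L v) ∧ (∀ v ∈ A, md G φ v A ≤ d) := by
  intro n
  induction n with
  | zero =>
    intro A hcard
    have : A = ∅ := Finset.card_eq_zero.mp (Nat.le_zero.mp hcard)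
    subst this
    exact ⟨fun _ => 0, fun v hv => absurd hv (Finset.notMem_empty v),
      fun v hv => absurd hv (Finset.notMem_empty v)⟩
  | succ n ih =>
    intro A hcard
    rcases A.eq_empty_or_nonempty with rfl | hAne
    · exact ⟨fun _ => 0, fun v hv => absurd hv (Finset.notMem_empty v),
        fun v hv => absurd hv (Finset.notMem_empty v)⟩
    obtain ⟨X, hXA, hXne, hX⟩ := core G A k d (hdens A hAne)
    have hA'card : (A \ X).card ≤ n := by
      have h1 : (A \ X).card = A.card - X.card := Finset.card_sdiff_of_subset hXA
      have h2 : 0 < X.card := Finset.card_pos.mpr hXne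
      omega
    obtain ⟨ψ, hψL, hψd⟩ := ih (A \ X) hA'card
    set L' : V → Finset ℕ :=
      fun u => (L u) \ (((A \ X).filter (fun w => G.Adj u w)).image ψ) with hL'def
    have hdeg' : ∀ u ∈ X, nd G u X + 1 ≤ (L' u).card * (d + 1) := by
      intro u hu
      have hb : (((A \ X).filter (fun w => G.Adj u w)).image ψ).card ≤ nd G u (A \ X) :=
        Finset.card_image_le
      have hcb : k ≤ (L' u).card + nd G u (A \ X) := by
        have h1 : (L u).card ≤ (L' u).card
            + (((A \ X).filter (fun w => G.Adj u w)).image ψ).card := by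
          rw [hL'def]
          calc (L u).card
              ≤ ((L u) \ (((A \ X).filter (fun w => G.Adj u w)).image ψ)
                  ∪ (((A \ X).filter (fun w => G.Adj u w)).image ψ)).card := by
                apply Finset.card_le_card
                intro c hc
                by_cases hmem : c ∈ ((A \ X).filter (fun w => G.Adj u w)).image ψ
                · exact Finset.mem_union_right _ hmem
                · exact Finset.mem_union_left _ (Finset.mem_sdiff.mpr ⟨hc, hmem⟩)
            _ ≤ _ := Finset.card_union_le _ _
        calc k ≤ (L u).card := hL u
          _ ≤ (L' u).card + (((A \ X).filter (fun w => G.Adj u w)).image ψ).card := h1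
          _ ≤ (L' u).card + nd G u (A \ X) := by omega
      have hXu := hX u hu
      have h2 : k * (d+1) ≤ ((L' u).card + nd G u (A \ X)) * (d+1) :=
        Nat.mul_le_mul_right _ hcb
      have h3 : (d+1) * nd G u (A \ X) + (nd G u X + 1)
          ≤ (L' u).card * (d+1) + nd G u (A \ X) * (d+1) := by
        calc (d+1) * nd G u (A \ X) + (nd G u X + 1)
            = (d+1) * nd G u (A \ X) + nd G u X + 1 := by ring
          _ ≤ k * (d+1) := hXu
          _ ≤ ((L' u).card + nd G u (A \ X)) * (d+1) := h2
          _ = (L' u).card * (d+1) + nd G u (A \ X) * (d+1) := by ring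
      have h4 : nd G u (A \ X) * (d+1) + (nd G u X + 1)
          ≤ nd G u (A \ X) * (d+1) + (L' u).card * (d+1) := by
        calc nd G u (A \ X) * (d+1) + (nd G u X + 1)
            = (d+1) * nd G u (A \ X) + (nd G u X + 1) := by ring
          _ ≤ (L' u).card * (d+1) + nd G u (A \ X) * (d+1) := h3
          _ = nd G u (A \ X) * (d+1) + (L' u).card * (d+1) := by ring
      exact Nat.le_of_add_le_add_left h4
    obtain ⟨χ, hχL, hχd⟩ := thmB G d X L' hdeg'
    refine ⟨fun v => if v ∈ X then χ v else ψ v, ?_, ?_⟩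
    · intro v hv
      show (if v ∈ X then χ v else ψ v) ∈ L v
      by_cases hvX : v ∈ X
      · rw [if_pos hvX]
        have := hχL v hvX
        rw [hL'def] at this
        exact (Finset.mem_sdiff.mp this).1
      · rw [if_neg hvX]
        exact hψL v (Finset.mem_sdiff.mpr ⟨hv, hvX⟩)
    · intro v hv
      set φ : V → ℕ := fun v => if v ∈ X then χ v else ψ v with hφdef
      have hAunion : X ∪ (A \ X) = A := Finset.union_sdiff_of_subset hXA
      have hdisj : Disjoint X (A \ X) := Finset.disjoint_sdiff
      have hsplit : md G φ v A
          = (X.filter (fun w => G.Adj v w ∧ φ w = φ v)).card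
            + ((A \ X).filter (fun w => G.Adj v w ∧ φ w = φ v)).card := by
        unfold md cd
        have hfu : X.filter (fun w => G.Adj v w ∧ φ w = φ v)
            ∪ (A \ X).filter (fun w => G.Adj v w ∧ φ w = φ v)
            = A.filter (fun w => G.Adj v w ∧ φ w = φ v) := by
          rw [← Finset.filter_union, hAunion]
        rw [← hfu]
        exact Finset.card_union_of_disjoint
          (Finset.disjoint_filter_filter hdisj)
      by_cases hvX : v ∈ X
      · have hφv : φ v = χ v := if_pos hvX
        have t1 : (X.filter (fun w => G.Adj v w ∧ φ w = φ v)).card = md G χ v X := by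
          unfold md cd
          congr 1
          apply Finset.filter_congr
          intro w hw
          rw [hφv]
          have : φ w = χ w := if_pos hw
          rw [this]
        have t2 : ((A \ X).filter (fun w => G.Adj v w ∧ φ w = φ v)).card = 0 := by
          rw [Finset.card_eq_zero, Finset.filter_eq_empty_iff]
          rintro w hw ⟨hadj, heq⟩
          have hφw : φ w = ψ w := if_neg (fun hc => (Finset.mem_sdiff.mp hw).2 hc)
          rw [hφw, hφv] at heq
          have hmem : ψ w ∈ ((A \ X).filter (fun w => G.Adj v w)).image ψ :=
            Finset.mem_image.mpr ⟨w, Finset.mem_filter.mpr ⟨hw, hadj⟩, rfl⟩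
          have := hχL v hvX
          rw [hL'def] at this
          exact (Finset.mem_sdiff.mp this).2 (heq ▸ hmem)
        rw [hsplit, t1, t2, add_zero]
        exact hχd v hvX
      · have hφv : φ v = ψ v := if_neg hvX
        have hvA' : v ∈ A \ X := Finset.mem_sdiff.mpr ⟨hv, hvX⟩
        have t1 : (X.filter (fun w => G.Adj v w ∧ φ w = φ v)).card = 0 := by
          rw [Finset.card_eq_zero, Finset.filter_eq_empty_iff]
          rintro w hw ⟨hadj, heq⟩
          have hφw : φ w = χ w := if_pos hw
          rw [hφw, hφv] at heq
          have hmem : ψ v ∈ ((A \ X).filter (fun z => G.Adj w z)).image ψ :=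
            Finset.mem_image.mpr ⟨v, Finset.mem_filter.mpr ⟨hvA', hadj.symm⟩, rfl⟩
          have := hχL w hw
          rw [hL'def] at this
          exact (Finset.mem_sdiff.mp this).2 (heq ▸ hmem)
        have t2 : ((A \ X).filter (fun w => G.Adj v w ∧ φ w = φ v)).card
            = md G ψ v (A \ X) := by
          unfold md cd
          congr 1
          apply Finset.filter_congr
          intro w hw
          rw [hφv]
          have : φ w = ψ w := if_neg (fun hc => (Finset.mem_sdiff.mp hw).2 hc)
          rw [this]
        rw [hsplit, t1, t2, zero_add]
        exact hψd v hvA'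

lemma degPairs_eq [DecidableEq V] (s : Finset V) :
    G.degPairs s = ∑ v ∈ s, nd G v s := by
  classical
  have h1 : {p : V × V | p.1 ∈ s ∧ p.2 ∈ s ∧ G.Adj p.1 p.2}
      = ↑((s ×ˢ s).filter (fun p : V × V => G.Adj p.1 p.2)) := by
    ext ⟨a, b⟩
    simp only [Set.mem_setOf_eq, Finset.coe_filter, Finset.mem_product]
    tauto
  rw [SimpleGraph.degPairs, h1, Set.ncard_coe_finset]
  rw [Finset.card_eq_sum_card_fiberwise
    (f := Prod.fst) (t := s)
    (fun p hp => (Finset.mem_product.mp (Finset.mem_filter.mp hp).1).1)]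
  refine Finset.sum_congr rfl (fun a ha => ?_)
  rw [Finset.filter_filter]
  have e : ((s ×ˢ s).filter (fun p : V × V => G.Adj p.1 p.2 ∧ p.1 = a))
      = {a} ×ˢ (s.filter (fun w => G.Adj a w)) := by
    ext ⟨x, y⟩
    simp only [Finset.mem_filter, Finset.mem_product, Finset.mem_singleton]
    constructor
    · rintro ⟨⟨hx, hy⟩, hadj, hxa⟩
      subst hxa
      exact ⟨rfl, hy, hadj⟩
    · rintro ⟨hxa, hy, hadj⟩
      subst hxa
      exact ⟨⟨ha, hy⟩, hadj, rfl⟩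
  rw [e, Finset.card_product, Finset.card_singleton, one_mul]
  rfl

end DefColAux

theorem stmt3 {V : Type*} [Fintype V] (G : SimpleGraph V) (k d : ℕ) (hk : 1 ≤ k)
    (hmad : ∀ s : Finset V, s.Nonempty →
      (G.degPairs s : ℚ) < (2 * d + 2) / (d + 2) * k * s.card)
    (L : V → Finset ℕ) (hL : ∀ v, k ≤ (L v).card) :
    ∃ φ : V → ℕ, (∀ v, φ v ∈ L v) ∧ G.DefectLe φ d := by
  classical
  letI : DecidableRel G.Adj := Classical.decRel _
  have hdens : ∀ s : Finset V, s.Nonempty →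
      (d+2) * (∑ v ∈ s, DefColAux.nd G v s) + 1 ≤ 2*k*(d+1)*s.card := by
    intro s hs
    have h := hmad s hs
    rw [DefColAux.degPairs_eq G s] at h
    have hd2 : (0:ℚ) < (d:ℚ) + 2 := by positivity
    rw [div_mul_eq_mul_div, div_mul_eq_mul_div, lt_div_iff₀ hd2] at h
    have hnat : (∑ v ∈ s, DefColAux.nd G v s) * (d+2) < (2*d+2)*k*s.card := by
      exact_mod_cast h
    calc (d+2) * (∑ v ∈ s, DefColAux.nd G v s) + 1
        = (∑ v ∈ s, DefColAux.nd G v s) * (d+2) + 1 := by ring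
      _ ≤ (2*d+2)*k*s.card := Nat.succ_le_of_lt hnat
      _ = 2*k*(d+1)*s.card := by ring
  obtain ⟨φ, hmem, hdef⟩ :=
    DefColAux.main G k d L hL hdens Finset.univ.card Finset.univ le_rfl
  refine ⟨φ, fun v => hmem v (Finset.mem_univ v), ?_⟩
  intro v
  have hset : {w : V | G.Adj v w ∧ φ w = φ v}
      = ↑(Finset.univ.filter (fun w => G.Adj v w ∧ φ w = φ v)) := by
    ext w
    simp
  rw [hset, Set.ncard_coe_finset]
  exact hdef v (Finset.mem_univ v)
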